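/- Each quaternionic Appell polynomial Q_k(q,q̄) = Σ_{j=0}^k (2(k-j+1)/((k+1)(k+2))) q^{k-j} q̄^j is Fueter regular on ℍ, i.e. D Q_k = 0 where D = ∂_{x_0} + i∂_{x_1} + j∂_{x_2} + k∂_{x_3}. -/

import Mathlib

open Quaternion Real MeasureTheory

noncomputable section

/-- The quaternion imaginary unit `i`. -/
def qi : ℍ[ℝ] := ⟨0,1,0,0⟩
/-- The quaternion imaginary unit `j`. -/
def qj : ℍ[ℝ] := ⟨0,0,1,0⟩
/-- The quaternion imaginary unit `k`. -/
def qk : ℍ[ℝ] := ⟨0,0,0,1⟩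

/-- Directional (partial) derivative of `f : ℍ → ℍ` at `q` in direction `v`. -/
def pd (v : ℍ[ℝ]) (f : ℍ[ℝ] → ℍ[ℝ]) (q : ℍ[ℝ]) : ℍ[ℝ] := fderiv ℝ f q v

/-- The Cauchy–Fueter operator `D = ∂_{x₀} + i∂_{x₁} + j∂_{x₂} + k∂_{x₃}`. -/
def Dop (f : ℍ[ℝ] → ℍ[ℝ]) (q : ℍ[ℝ]) : ℍ[ℝ] :=
  pd 1 f q + qi * pd qi f q + qj * pd qj f q + qk * pd qk f q

/-- The conjugate Cauchy–Fueter operator `D̄ = ∂_{x₀} - i∂_{x₁} - j∂_{x₂} - k∂_{x₃}`. -/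
def Dbar (f : ℍ[ℝ] → ℍ[ℝ]) (q : ℍ[ℝ]) : ℍ[ℝ] :=
  pd 1 f q - qi * pd qi f q - qj * pd qj f q - qk * pd qk f q

/-- The 4-dimensional Laplacian `Δ = ∂²_{x₀} + ∂²_{x₁} + ∂²_{x₂} + ∂²_{x₃}`. -/
def qlap (f : ℍ[ℝ] → ℍ[ℝ]) (q : ℍ[ℝ]) : ℍ[ℝ] :=
  pd 1 (pd 1 f) q + pd qi (pd qi f) q + pd qj (pd qj f) q + pd qk (pd qk f) q

/-- The quaternionic Appell polynomials
`Q_k(q,q̄) = Σ_{j=0}^k (2(k-j+1)/((k+1)(k+2))) q^{k-j} q̄^j`. -/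
def Qa (k : ℕ) (q : ℍ[ℝ]) : ℍ[ℝ] :=
  ∑ j ∈ Finset.range (k+1),
    ((2*((k:ℝ)-j+1))/(((k:ℝ)+1)*((k:ℝ)+2))) • (q^(k-j) * (star q)^j)

/-- The generalized Appell polyanalytic polynomials `M_{k,s}(q,q̄) = x₀^k Q_s(q,q̄)`,
where `x₀ = Re q`. -/
def Ma (k s : ℕ) (q : ℍ[ℝ]) : ℍ[ℝ] := q.re ^ k • Qa s q
/- ## Auxiliary: derivatives -/

instance : StarModule ℝ ℍ[ℝ] := ⟨fun s a => Quaternion.star_smul s a⟩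
instance : ContinuousStar ℍ[ℝ] :=
  ⟨Isometry.continuous (fun a b => by
    simp [edist_eq_enorm_sub, ← star_sub, enorm_eq_nnnorm, Quaternion.nnnorm_star])⟩

def starCLM : ℍ[ℝ] →L[ℝ] ℍ[ℝ] := ((starL' ℝ : ℍ[ℝ] ≃L[ℝ] ℍ[ℝ]) : ℍ[ℝ] →L[ℝ] ℍ[ℝ])

lemma star_hasFDeriv (q : ℍ[ℝ]) : HasFDerivAt (star : ℍ[ℝ] → ℍ[ℝ]) starCLM q :=
  (starL' ℝ : ℍ[ℝ] ≃L[ℝ] ℍ[ℝ]).toContinuousLinearMap.hasFDerivAt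

lemma mon_diff (q : ℍ[ℝ]) (m j : ℕ) : DifferentiableAt ℝ (fun x : ℍ[ℝ] => x^m * (star x)^j) q :=
  (differentiableAt_fun_id.fun_pow m).mul ((star_hasFDeriv q).differentiableAt.fun_pow j)

lemma pd_mul (f g : ℍ[ℝ] → ℍ[ℝ]) (v q : ℍ[ℝ]) (hf : DifferentiableAt ℝ f q)
    (hg : DifferentiableAt ℝ g q) :
    pd v (fun x => f x * g x) q = pd v f q * g q + f q * pd v g q := by
  have := (hf.hasFDerivAt.fun_mul' hg.hasFDerivAt).fderiv
  simp only [pd, this, ContinuousLinearMap.add_apply, ContinuousLinearMap.smul_apply,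
    ContinuousLinearMap.smulRight_apply, smul_eq_mul]
  exact add_comm _ _

lemma pd_id (v q : ℍ[ℝ]) : pd v (fun x => x) q = v := by
  simp [pd, fderiv_id']

lemma pd_star (v q : ℍ[ℝ]) : pd v (star : ℍ[ℝ] → ℍ[ℝ]) q = star v := by
  simp [pd, (star_hasFDeriv q).fderiv, starCLM]

lemma pd_pow (v q : ℍ[ℝ]) (n : ℕ) :
    pd v (fun x => x ^ n) q = ∑ l ∈ Finset.range n, q^l * v * q^(n-1-l) := by
  induction n with
  | zero => simp [pd]
  | succ n ih =>
    have : (fun x : ℍ[ℝ] => x ^ (n+1)) = fun x => x^n * x := by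
      funext x; rw [pow_succ]
    rw [this, pd_mul _ _ _ _ (differentiableAt_fun_id.fun_pow n) differentiableAt_fun_id, ih, pd_id,
      Finset.sum_range_succ, Finset.sum_mul]
    congr 1
    · refine Finset.sum_congr rfl fun l hl => ?_
      rw [Finset.mem_range] at hl
      have he : n - 1 - l + 1 = n + 1 - 1 - l := by omega
      rw [mul_assoc, mul_assoc, ← pow_succ, he, ← mul_assoc]
    · simp

lemma pd_star_pow (v q : ℍ[ℝ]) (n : ℕ) :
    pd v (fun x => (star x) ^ n) q
      = ∑ l ∈ Finset.range n, (star q)^l * star v * (star q)^(n-1-l) := by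
  induction n with
  | zero => simp [pd]
  | succ n ih =>
    have : (fun x : ℍ[ℝ] => (star x) ^ (n+1)) = fun x => (star x)^n * star x := by
      funext x; rw [pow_succ]
    rw [this, pd_mul _ _ _ _ ((star_hasFDeriv q).differentiableAt.fun_pow n)
      (star_hasFDeriv q).differentiableAt, ih, pd_star,
      Finset.sum_range_succ, Finset.sum_mul]
    congr 1
    · refine Finset.sum_congr rfl fun l hl => ?_
      rw [Finset.mem_range] at hl
      have he : n - 1 - l + 1 = n + 1 - 1 - l := by omega
      rw [mul_assoc, mul_assoc, ← pow_succ, he, ← mul_assoc]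
    · simp

lemma pd_mon (v q : ℍ[ℝ]) (m j : ℕ) :
    pd v (fun x => x^m * (star x)^j) q =
      (∑ l ∈ Finset.range m, q^l * v * q^(m-1-l)) * (star q)^j
      + q^m * ∑ l ∈ Finset.range j, (star q)^l * star v * (star q)^(j-1-l) := by
  rw [pd_mul _ _ _ _ (differentiableAt_fun_id.fun_pow m) ((star_hasFDeriv q).differentiableAt.fun_pow j),
    pd_pow, pd_star_pow]

/- ## Auxiliary: quaternion identities -/

lemma idA (y : ℍ[ℝ]) : y + qi*y*qi + qj*y*qj + qk*y*qk = (-2:ℝ) • star y := by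
  ext <;> simp [Quaternion.re_mul, Quaternion.imI_mul, Quaternion.imJ_mul,
    Quaternion.imK_mul] <;> simp [qi, qj, qk] <;> ring

lemma idB (y : ℍ[ℝ]) : y - qi*y*qi - qj*y*qj - qk*y*qk = (2:ℝ) • y + (2:ℝ) • star y := by
  ext <;> simp [Quaternion.re_mul, Quaternion.imI_mul, Quaternion.imJ_mul,
    Quaternion.imK_mul] <;> simp [qi, qj, qk] <;> ring

lemma star_qi : star qi = -qi := by ext <;> simp <;> simp [qi]
lemma star_qj : star qj = -qj := by ext <;> simp <;> simp [qj]
lemma star_qk : star qk = -qk := by ext <;> simp <;> simp [qk]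

lemma ptA (y X Z : ℍ[ℝ]) :
    (y*1*X)*Z + qi*((y*qi*X)*Z) + qj*((y*qj*X)*Z) + qk*((y*qk*X)*Z)
      = (-2:ℝ) • (star y * (X * Z)) := by
  calc (y*1*X)*Z + qi*((y*qi*X)*Z) + qj*((y*qj*X)*Z) + qk*((y*qk*X)*Z)
      = (y + qi*y*qi + qj*y*qj + qk*y*qk) * (X*Z) := by noncomm_ring
    _ = ((-2:ℝ) • star y) * (X*Z) := by rw [idA]
    _ = (-2:ℝ) • (star y * (X * Z)) := smul_mul_assoc _ _ _

lemma ptB (P W Y : ℍ[ℝ]) :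
    P*(W*1*Y) + qi*(P*(W*(star qi)*Y)) + qj*(P*(W*(star qj)*Y)) + qk*(P*(W*(star qk)*Y))
      = (2:ℝ) • (P*W*Y) + (2:ℝ) • (star (P*W) * Y) := by
  rw [star_qi, star_qj, star_qk]
  calc P*(W*1*Y) + qi*(P*(W*(-qi)*Y)) + qj*(P*(W*(-qj)*Y)) + qk*(P*(W*(-qk)*Y))
      = ((P*W) - qi*(P*W)*qi - qj*(P*W)*qj - qk*(P*W)*qk) * Y := by noncomm_ring
    _ = ((2:ℝ) • (P*W) + (2:ℝ) • star (P*W)) * Y := by rw [idB]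
    _ = (2:ℝ) • (P*W*Y) + (2:ℝ) • (star (P*W) * Y) := by
        rw [add_mul, smul_mul_assoc, smul_mul_assoc]

lemma Ej (m j : ℕ) (q : ℍ[ℝ]) :
    pd 1 (fun x => x^m * (star x)^j) q + qi * pd qi (fun x => x^m * (star x)^j) q
      + qj * pd qj (fun x => x^m * (star x)^j) q + qk * pd qk (fun x => x^m * (star x)^j) q
    = ∑ l ∈ Finset.range m, (-2:ℝ) • ((star q)^l * (q^(m-1-l) * (star q)^j))
      + ∑ l ∈ Finset.range j, ((2:ℝ) • (q^m * (star q)^l * (star q)^(j-1-l))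
          + (2:ℝ) • (star (q^m * (star q)^l) * (star q)^(j-1-l))) := by
  rw [pd_mon, pd_mon, pd_mon, pd_mon]
  simp only [Finset.sum_mul, Finset.mul_sum, mul_add, Finset.sum_add_distrib, star_one]
  have regroup : ∀ (a1 a2 a3 a4 b1 b2 b3 b4 : ℍ[ℝ]),
      a1+b1+(a2+b2)+(a3+b3)+(a4+b4) = (a1+a2+a3+a4)+(b1+b2+b3+b4) := by intros; abel
  rw [regroup]
  simp only [← Finset.sum_add_distrib]
  congr 1
  · refine Finset.sum_congr rfl fun l hl => ?_
    rw [ptA (q^l) (q^(m-1-l)) ((star q)^j), star_pow]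
  · refine Finset.sum_congr rfl fun l hl => ?_
    rw [ptB (q^m) ((star q)^l) ((star q)^(j-1-l))]

/- ## Reindexing lemmas -/

lemma reindex1 (N : ℕ → ℍ[ℝ]) (c : ℝ) (j k : ℕ) (hj : j ≤ k) :
    ∑ l ∈ Finset.range (k-j), c • N (j+l)
      = ∑ a ∈ Finset.range k, (if j ≤ a then c else 0) • N a := by
  symm
  calc ∑ a ∈ Finset.range k, (if j ≤ a then c else 0) • N a
      = ∑ a ∈ Finset.range j, (if j ≤ a then c else 0) • N a
        + ∑ a ∈ Finset.Ico j k, (if j ≤ a then c else 0) • N a :=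
        (Finset.sum_range_add_sum_Ico _ hj).symm
    _ = 0 + ∑ a ∈ Finset.Ico j k, c • N a := by
        congr 1
        · refine Finset.sum_eq_zero fun a ha => ?_
          rw [Finset.mem_range] at ha
          rw [if_neg (by omega), zero_smul]
        · refine Finset.sum_congr rfl fun a ha => ?_
          rw [Finset.mem_Ico] at ha
          rw [if_pos ha.1]
    _ = ∑ l ∈ Finset.range (k-j), c • N (j+l) := by
        rw [zero_add, Finset.sum_Ico_eq_sum_range]

lemma reindex3 (N : ℕ → ℍ[ℝ]) (c : ℝ) (j k : ℕ) (hj : j ≤ k) :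
    ∑ l ∈ Finset.range j, c • N (k-1-l)
      = ∑ a ∈ Finset.range k, (if k-j ≤ a then c else 0) • N a := by
  symm
  calc ∑ a ∈ Finset.range k, (if k-j ≤ a then c else 0) • N a
      = ∑ a ∈ Finset.range (k-j), (if k-j ≤ a then c else 0) • N a
        + ∑ a ∈ Finset.Ico (k-j) k, (if k-j ≤ a then c else 0) • N a :=
        (Finset.sum_range_add_sum_Ico _ (by omega)).symm
    _ = 0 + ∑ a ∈ Finset.Ico (k-j) k, c • N a := by
        congr 1
        · refine Finset.sum_eq_zero fun a ha => ?_
          rw [Finset.mem_range] at ha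
          rw [if_neg (by omega), zero_smul]
        · refine Finset.sum_congr rfl fun a ha => ?_
          rw [Finset.mem_Ico] at ha
          rw [if_pos ha.1]
    _ = ∑ l ∈ Finset.range j, c • N (k-j+l) := by
        rw [zero_add, Finset.sum_Ico_eq_sum_range]
        have h2 : k-(k-j) = j := by omega
        rw [h2]
    _ = ∑ l ∈ Finset.range j, c • N (k-1-l) := by
        rw [← Finset.sum_range_reflect]
        refine Finset.sum_congr rfl fun l hl => ?_
        rw [Finset.mem_range] at hl
        congr 2
        omega

lemma reindex2 (N : ℕ → ℍ[ℝ]) (j k : ℕ) (hj : j ≤ k) :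
    (2*(j:ℝ)) • N (j-1)
      = ∑ a ∈ Finset.range k, (if a+1 = j then 2*(j:ℝ) else 0) • N a := by
  cases j with
  | zero => simp
  | succ jj =>
    have h : ∀ a : ℕ, (a+1 = jj+1) = (a = jj) := by intro a; simp
    simp only [h]
    rw [Finset.sum_congr rfl (fun a _ => ?_), Finset.sum_ite_eq' (Finset.range k) jj
      (fun a => (2*((jj:ℝ)+1)) • N a), if_pos (Finset.mem_range.mpr (by omega))]
    · push_cast; norm_num
    · rw [ite_smul, zero_smul]
      push_cast
      rfl

/- ## Scalar lemmas -/

def gcoef (k j a : ℕ) : ℝ :=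
  (if j ≤ a then (-2:ℝ) else 0) + (if a+1 = j then 2*(j:ℝ) else 0)
    + (if k-j ≤ a then (2:ℝ) else 0)

lemma gauss (c : ℝ) (n : ℕ) :
    ∑ l ∈ Finset.range n, (c - l + 1) = n*(c+1) - n*(n-1)/2 := by
  induction n with
  | zero => simp
  | succ n ih =>
    rw [Finset.sum_range_succ, ih]
    push_cast
    ring

lemma coef_zero (k a : ℕ) (ha : a < k) :
    ∑ j ∈ Finset.range (k+1),
      (2*((k:ℝ)-j+1))/(((k:ℝ)+1)*((k:ℝ)+2)) * gcoef k j a = 0 := by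
  have hD : ∀ j : ℕ, (2*((k:ℝ)-j+1))/(((k:ℝ)+1)*((k:ℝ)+2)) * gcoef k j a
      = (2/(((k:ℝ)+1)*((k:ℝ)+2))) * (((k:ℝ)-j+1) * gcoef k j a) := by
    intro j; ring
  simp only [hD, ← Finset.mul_sum]
  have key : ∑ j ∈ Finset.range (k+1), ((k:ℝ)-j+1) * gcoef k j a = 0 := by
    simp only [gcoef, mul_add]
    rw [Finset.sum_add_distrib, Finset.sum_add_distrib]
    have h1 : ∑ j ∈ Finset.range (k+1), ((k:ℝ)-j+1) * (if j ≤ a then (-2:ℝ) else 0)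
        = -2 * ((a+1)*((k:ℝ)+1) - (a+1)*a/2) := by
      rw [← Finset.sum_range_add_sum_Ico _ (show a+1 ≤ k+1 by omega)]
      have e1 : ∑ j ∈ Finset.range (a+1), ((k:ℝ)-j+1) * (if j ≤ a then (-2:ℝ) else 0)
          = -2 * ∑ j ∈ Finset.range (a+1), ((k:ℝ)-j+1) := by
        rw [Finset.mul_sum]
        refine Finset.sum_congr rfl fun jx hjx => ?_
        rw [Finset.mem_range] at hjx
        rw [if_pos (by omega)]
        ring
      have e2 : ∑ j ∈ Finset.Ico (a+1) (k+1), ((k:ℝ)-j+1) * (if j ≤ a then (-2:ℝ) else 0)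
          = 0 := by
        refine Finset.sum_eq_zero fun jx hjx => ?_
        rw [Finset.mem_Ico] at hjx
        rw [if_neg (by omega), mul_zero]
      rw [e1, e2, add_zero, gauss]
      push_cast
      ring
    have h2 : ∑ j ∈ Finset.range (k+1), ((k:ℝ)-j+1) * (if a+1 = j then 2*(j:ℝ) else 0)
        = ((k:ℝ)-(a+1)+1) * (2*((a:ℝ)+1)) := by
      rw [Finset.sum_eq_single (a+1)]
      · rw [if_pos rfl]; push_cast; ring
      · intro b _ hb
        rw [if_neg (fun h => hb h.symm), mul_zero]
      · intro h
        exact absurd (Finset.mem_range.mpr (by omega)) h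
    have h3 : ∑ j ∈ Finset.range (k+1), ((k:ℝ)-j+1) * (if k-j ≤ a then (2:ℝ) else 0)
        = 2 * ((a+1)*((a:ℝ)+1) - (a+1)*a/2) := by
      rw [← Finset.sum_range_add_sum_Ico _ (show k-a ≤ k+1 by omega)]
      have e1 : ∑ j ∈ Finset.range (k-a), ((k:ℝ)-j+1) * (if k-j ≤ a then (2:ℝ) else 0)
          = 0 := by
        refine Finset.sum_eq_zero fun jx hjx => ?_
        rw [Finset.mem_range] at hjx
        rw [if_neg (by omega), mul_zero]
      have e2 : ∑ j ∈ Finset.Ico (k-a) (k+1), ((k:ℝ)-j+1) * (if k-j ≤ a then (2:ℝ) else 0)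
          = 2 * ∑ l ∈ Finset.range (a+1), ((a:ℝ)-l+1) := by
        rw [Finset.sum_Ico_eq_sum_range]
        have hr : k+1-(k-a) = a+1 := by omega
        rw [hr, Finset.mul_sum]
        refine Finset.sum_congr rfl fun l hl => ?_
        rw [Finset.mem_range] at hl
        rw [if_pos (by omega)]
        have hc : ((k-a+l : ℕ) : ℝ) = (k:ℝ) - a + l := by
          push_cast [Nat.cast_sub (by omega : a ≤ k)]
          ring
        rw [hc]
        ring
      rw [e1, e2, zero_add, gauss]
      push_cast
      ring
    rw [h1, h2, h3]
    push_cast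
    ring
  rw [key, mul_zero]

/- ## Per-j normalized form -/

lemma Ej2 (k j : ℕ) (hj : j ≤ k) (q : ℍ[ℝ]) :
    pd 1 (fun x => x^(k-j) * (star x)^j) q + qi * pd qi (fun x => x^(k-j) * (star x)^j) q
      + qj * pd qj (fun x => x^(k-j) * (star x)^j) q
      + qk * pd qk (fun x => x^(k-j) * (star x)^j) q
    = ∑ a ∈ Finset.range k, gcoef k j a • (q^(k-1-a) * (star q)^a) := by
  have hc : Commute (star q) q := star_comm_self' q
  rw [Ej (k-j) j q]
  have part1 : ∑ l ∈ Finset.range (k-j),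
      (-2:ℝ) • ((star q)^l * (q^(k-j-1-l) * (star q)^j))
      = ∑ l ∈ Finset.range (k-j), (-2:ℝ) • (q^(k-1-(j+l)) * (star q)^(j+l)) := by
    refine Finset.sum_congr rfl fun l hl => ?_
    rw [Finset.mem_range] at hl
    congr 1
    calc (star q)^l * (q^(k-j-1-l) * (star q)^j)
        = ((star q)^l * q^(k-j-1-l)) * (star q)^j := (mul_assoc _ _ _).symm
      _ = (q^(k-j-1-l) * (star q)^l) * (star q)^j := by rw [(hc.pow_pow l (k-j-1-l)).eq]
      _ = q^(k-j-1-l) * (star q)^(l+j) := by rw [mul_assoc, ← pow_add]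
      _ = q^(k-1-(j+l)) * (star q)^(j+l) := by
          have e1 : k-j-1-l = k-1-(j+l) := by omega
          have e2 : l+j = j+l := by omega
          rw [e1, e2]
  have part2 : ∑ l ∈ Finset.range j,
      ((2:ℝ) • (q^(k-j) * (star q)^l * (star q)^(j-1-l))
        + (2:ℝ) • (star (q^(k-j) * (star q)^l) * (star q)^(j-1-l)))
      = ∑ l ∈ Finset.range j, ((2:ℝ) • (q^(k-1-(j-1)) * (star q)^(j-1))
        + (2:ℝ) • (q^(k-1-(k-1-l)) * (star q)^(k-1-l))) := by
    refine Finset.sum_congr rfl fun l hl => ?_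
    rw [Finset.mem_range] at hl
    congr 2
    · rw [mul_assoc, ← pow_add]
      have e1 : l+(j-1-l) = j-1 := by omega
      have e2 : k-1-(j-1) = k-j := by omega
      rw [e1, e2]
    · rw [star_mul, star_pow, star_star, star_pow, mul_assoc, ← pow_add]
      have e1 : k-j+(j-1-l) = k-1-l := by omega
      have e2 : k-1-(k-1-l) = l := by omega
      rw [e1, e2]
  rw [part1, part2, reindex1 (fun a => q^(k-1-a) * (star q)^a) (-2:ℝ) j k hj,
    Finset.sum_add_distrib, Finset.sum_const, Finset.card_range,
    reindex3 (fun a => q^(k-1-a) * (star q)^a) (2:ℝ) j k hj]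
  have hmid : j • ((2:ℝ) • (q^(k-1-(j-1)) * (star q)^(j-1)))
      = (2*(j:ℝ)) • (q^(k-1-(j-1)) * (star q)^(j-1)) := by
    rw [← Nat.cast_smul_eq_nsmul ℝ, smul_smul]
    norm_num
    ring_nf
  rw [hmid, reindex2 (fun a => q^(k-1-a) * (star q)^a) j k hj,
    ← Finset.sum_add_distrib, ← Finset.sum_add_distrib]
  refine Finset.sum_congr rfl fun a _ => ?_
  simp only [gcoef, add_smul]
  abel

/- ## Assembly -/

lemma pd_sum (v q : ℍ[ℝ]) (s : Finset ℕ) (F : ℕ → ℍ[ℝ] → ℍ[ℝ])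
    (h : ∀ i ∈ s, DifferentiableAt ℝ (F i) q) :
    pd v (fun x => ∑ i ∈ s, F i x) q = ∑ i ∈ s, pd v (F i) q := by
  simp only [pd]
  rw [fderiv_fun_sum h]
  simp

lemma pd_csmul (v q : ℍ[ℝ]) (c : ℝ) (f : ℍ[ℝ] → ℍ[ℝ]) (h : DifferentiableAt ℝ f q) :
    pd v (fun x => c • f x) q = c • pd v f q := by
  simp only [pd]
  rw [fderiv_fun_const_smul h c]
  simp


/-- Each quaternionic Appell polynomial `Q_k(q,q̄)` is Fueter regular on `ℍ`:
`D Q_k = 0` everywhere, where `D` is the Cauchy–Fueter operator. -/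
theorem appell_fueter_regular (k : ℕ) (q : ℍ[ℝ]) :
    Dop (Qa k) q = 0 := by
  have hQpd : ∀ v, pd v (Qa k) q = ∑ j ∈ Finset.range (k+1),
      ((2*((k:ℝ)-j+1))/(((k:ℝ)+1)*((k:ℝ)+2))) •
        pd v (fun x => x^(k-j) * (star x)^j) q := by
    intro v
    rw [show Qa k = fun x => ∑ j ∈ Finset.range (k+1),
      ((2*((k:ℝ)-j+1))/(((k:ℝ)+1)*((k:ℝ)+2))) • (x^(k-j) * (star x)^j) from rfl]
    rw [pd_sum v q _ _ (fun i _ => (mon_diff q (k-i) i).fun_const_smul _)]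
    exact Finset.sum_congr rfl fun i _ => pd_csmul v q _ _ (mon_diff q (k-i) i)
  rw [Dop, hQpd 1, hQpd qi, hQpd qj, hQpd qk]
  simp only [Finset.mul_sum, mul_smul_comm]
  rw [← Finset.sum_add_distrib, ← Finset.sum_add_distrib, ← Finset.sum_add_distrib]
  calc ∑ j ∈ Finset.range (k+1),
        (((2*((k:ℝ)-j+1))/(((k:ℝ)+1)*((k:ℝ)+2))) • pd 1 (fun x => x^(k-j) * (star x)^j) q
          + ((2*((k:ℝ)-j+1))/(((k:ℝ)+1)*((k:ℝ)+2))) •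
            (qi * pd qi (fun x => x^(k-j) * (star x)^j) q)
          + ((2*((k:ℝ)-j+1))/(((k:ℝ)+1)*((k:ℝ)+2))) •
            (qj * pd qj (fun x => x^(k-j) * (star x)^j) q)
          + ((2*((k:ℝ)-j+1))/(((k:ℝ)+1)*((k:ℝ)+2))) •
            (qk * pd qk (fun x => x^(k-j) * (star x)^j) q))
      = ∑ j ∈ Finset.range (k+1), ((2*((k:ℝ)-j+1))/(((k:ℝ)+1)*((k:ℝ)+2))) •
          ∑ a ∈ Finset.range k, gcoef k j a • (q^(k-1-a) * (star q)^a) := by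
        refine Finset.sum_congr rfl fun j hj => ?_
        rw [Finset.mem_range] at hj
        rw [← smul_add, ← smul_add, ← smul_add, Ej2 k j (by omega) q]
    _ = 0 := by
        simp only [Finset.smul_sum, smul_smul]
        rw [Finset.sum_comm]
        refine Finset.sum_eq_zero fun a ha => ?_
        rw [Finset.mem_range] at ha
        rw [← Finset.sum_smul, coef_zero k a ha, zero_smul]
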